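/- A point x* ∈ ℝⁿ is a stationary point of ψ = f + φ (i.e. 0 ∈ ∂ψ(x*)) if and only if there exists z* with x* = prox_φ^Λ(z*) and F_nor^Λ(z*) = 0, where F_nor^Λ(z) = ∇f(prox_φ^Λ(z)) + Λ(z − prox_φ^Λ(z)). -/

import Mathlib

open scoped RealInnerProductSpace

/-- The convex subdifferential of a real-valued function. -/
def subdiff {n : ℕ} (φ : EuclideanSpace ℝ (Fin n) → ℝ) (x : EuclideanSpace ℝ (Fin n)) :
    Set (EuclideanSpace ℝ (Fin n)) :=
  {v | ∀ y, φ x + ⟪v, y - x⟫ ≤ φ y}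

/-- A point x* ∈ ℝⁿ is a stationary point of ψ = f + φ
(i.e. 0 ∈ ∂ψ(x*) = {∇f(x*)} + ∂φ(x*)) if and only if there exists z* with
x* = prox_φ^Λ(z*) and F_nor^Λ(z*) = 0, where
F_nor^Λ(z) = ∇f(prox_φ^Λ(z)) + Λ(z − prox_φ^Λ(z)). -/
theorem stationary_iff_normal_map_zero {n : ℕ}
    (f φ : EuclideanSpace ℝ (Fin n) → ℝ)
    (hf : ContDiff ℝ 1 f) (hφ : ConvexOn ℝ Set.univ φ)
    (Λ : Matrix (Fin n) (Fin n) ℝ) (hΛsym : Λ.IsSymm) (hΛ : Λ.PosDef)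
    (prox : EuclideanSpace ℝ (Fin n) → EuclideanSpace ℝ (Fin n))
    (hprox : ∀ z y, φ (prox z) +
        (1 / 2) * ⟪prox z - z, Matrix.toEuclideanLin Λ (prox z - z)⟫ ≤
      φ y + (1 / 2) * ⟪y - z, Matrix.toEuclideanLin Λ (y - z)⟫)
    (x : EuclideanSpace ℝ (Fin n)) :
    (0 : EuclideanSpace ℝ (Fin n)) ∈ (fun v => gradient f x + v) '' subdiff φ x ↔
      ∃ z, x = prox z ∧
        gradient f (prox z) + Matrix.toEuclideanLin Λ (z - prox z) = 0 := by
  classical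
  set L := Matrix.toEuclideanLin Λ with hLdef
  have hsym : ∀ u w : EuclideanSpace ℝ (Fin n), ⟪L u, w⟫ = ⟪u, L w⟫ := fun u w =>
    (Matrix.isHermitian_iff_isSymmetric.mp hΛ.1) u w
  have hsym' : ∀ u w : EuclideanSpace ℝ (Fin n), ⟪u, L w⟫ = ⟪w, L u⟫ := by
    intro u w; rw [← hsym w u, real_inner_comm]
  have hpos : ∀ u : EuclideanSpace ℝ (Fin n), u ≠ 0 → 0 < ⟪u, L u⟫ := by
    intro u hu
    have h := hΛ.dotProduct_mulVec_pos (x := WithLp.equiv 2 _ u) (by simpa using hu)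
    simpa [hLdef, Matrix.toEuclideanLin_apply, PiLp.inner_apply, dotProduct, mul_comm] using h
  have hpos0 : ∀ u : EuclideanSpace ℝ (Fin n), 0 ≤ ⟪u, L u⟫ := by
    intro u
    by_cases h : u = 0
    · simp [h]
    · exact (hpos u h).le
  have expand : ∀ (w d : EuclideanSpace ℝ (Fin n)) (t : ℝ),
      ⟪w + t • d, L (w + t • d)⟫ = ⟪w, L w⟫ + 2*t*⟪w, L d⟫ + t^2*⟪d, L d⟫ := by
    intro w d t
    have h1 : ⟪d, L w⟫ = ⟪w, L d⟫ := hsym' d w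
    simp only [map_add, map_smul, inner_add_left, inner_add_right,
      real_inner_smul_left, real_inner_smul_right, h1]
    ring
  -- key lemma : L (z - prox z) is a subgradient at prox z
  have key : ∀ z, L (z - prox z) ∈ subdiff φ (prox z) := by
    intro z y
    have hstep : ∀ t : ℝ, 0 < t → t ≤ 1 →
        0 ≤ (φ y - φ (prox z) + ⟪prox z - z, L (y - prox z)⟫) +
          (t/2) * ⟪y - prox z, L (y - prox z)⟫ := by
      intro t ht ht1
      have hconv := hφ.2 (Set.mem_univ (prox z)) (Set.mem_univ y)
        (by linarith : (0:ℝ) ≤ 1 - t) ht.le (by ring)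
      simp only [smul_eq_mul] at hconv
      have hineq := hprox z (prox z + t • (y - prox z))
      have hq : prox z + t • (y - prox z) - z = (prox z - z) + t • (y - prox z) := by abel
      rw [hq, expand] at hineq
      have hpt : prox z + t • (y - prox z) = (1-t) • prox z + t • y := by module
      rw [hpt] at hineq
      have h2 : 0 ≤ t * ((φ y - φ (prox z) + ⟪prox z - z, L (y - prox z)⟫) +
          (t/2) * ⟪y - prox z, L (y - prox z)⟫) := by nlinarith [hineq, hconv]
      exact nonneg_of_mul_nonneg_right h2 ht
    have hab : 0 ≤ φ y - φ (prox z) + ⟪prox z - z, L (y - prox z)⟫ := by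
      by_contra hneg
      push_neg at hneg
      set a : ℝ := φ y - φ (prox z) + ⟪prox z - z, L (y - prox z)⟫ with ha
      set b : ℝ := ⟪y - prox z, L (y - prox z)⟫ with hb
      have hbnn : 0 ≤ b := hpos0 _
      rcases eq_or_lt_of_le hbnn with hb0 | hb0
      · have := hstep 1 one_pos le_rfl
        rw [← hb0] at this; linarith
      · have ht : 0 < min 1 (-a/b) := lt_min one_pos (div_pos (neg_pos.2 hneg) hb0)
        have h1 := hstep _ ht (min_le_left _ _)
        have h2 : (min 1 (-a/b)) * b ≤ -a := by
          calc (min 1 (-a/b)) * b ≤ (-a/b) * b :=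
                mul_le_mul_of_nonneg_right (min_le_right _ _) hbnn
            _ = -a := div_mul_cancel₀ _ hb0.ne'
        linarith
    have hzp : ⟪L (z - prox z), y - prox z⟫ = -⟪prox z - z, L (y - prox z)⟫ := by
      have h0 : z - prox z = -(prox z - z) := by abel
      rw [h0, map_neg, inner_neg_left, hsym]
    show φ (prox z) + ⟪L (z - prox z), y - prox z⟫ ≤ φ y
    rw [hzp]; linarith
  constructor
  · rintro ⟨v, hv, hveq⟩
    simp only at hveq
    have hinj : Function.Injective L := by
      intro u₁ u₂ h12
      by_contra hne
      have hne' : u₁ - u₂ ≠ 0 := sub_ne_zero.2 hne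
      have := hpos _ hne'
      rw [map_sub, h12, sub_self, inner_zero_right] at this
      exact lt_irrefl _ this
    obtain ⟨w, hwv⟩ := (LinearMap.injective_iff_surjective).mp hinj v
    have hv' : ∀ y, φ x + ⟪v, y - x⟫ ≤ φ y := hv
    set z := x + w with hz
    have hzx : z - x = w := by rw [hz]; abel
    -- x is a minimizer
    have hxmin : ∀ y, φ x + (1/2) * ⟪x - z, L (x - z)⟫ ≤
        φ y + (1/2) * ⟪y - z, L (y - z)⟫ := by
      intro y
      have hsub := hv' y
      have hyz : y - z = (x - z) + (1:ℝ) • (y - x) := by module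
      rw [hyz, expand]
      have h1 : ⟪x - z, L (y - x)⟫ = -⟪v, y - x⟫ := by
        have h0 : x - z = -w := by rw [hz]; abel
        rw [h0, inner_neg_left, ← hwv, hsym]
      have h2 : 0 ≤ ⟪y - x, L (y - x)⟫ := hpos0 _
      rw [h1]
      nlinarith [hsub, h2]
    have hgeq : φ (prox z) + (1/2) * ⟪prox z - z, L (prox z - z)⟫ =
        φ x + (1/2) * ⟪x - z, L (x - z)⟫ :=
      le_antisymm (hprox z x) (hxmin (prox z))
    have hxp : x = prox z := by
      by_contra hne
      have hconv := hφ.2 (Set.mem_univ x) (Set.mem_univ (prox z))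
        (by norm_num : (0:ℝ) ≤ 1/2) (by norm_num : (0:ℝ) ≤ 1/2) (by norm_num)
      simp only [smul_eq_mul] at hconv
      have hm2 := hprox z ((1/2 : ℝ) • x + (1/2 : ℝ) • prox z)
      have hmz : (1/2 : ℝ) • x + (1/2 : ℝ) • prox z - z =
          (x - z) + (1/2 : ℝ) • ((prox z - z) - (x - z)) := by module
      rw [hmz, expand] at hm2
      have hdiff : 0 < ⟪prox z - z - (x - z), L (prox z - z - (x - z))⟫ := by
        have h0 : prox z - z - (x - z) = prox z - x := by abel
        rw [h0]; exact hpos _ (sub_ne_zero.2 fun h => hne h.symm)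
      have hexp := expand (x - z) (prox z - z - (x - z)) 1
      have h0 : (x - z) + (1:ℝ) • (prox z - z - (x - z)) = prox z - z := by module
      rw [h0] at hexp
      linarith [hm2, hconv, hgeq, hexp, hdiff]
    refine ⟨z, hxp, ?_⟩
    rw [← hxp, hzx, hwv]
    exact hveq
  · rintro ⟨z, hxz, hzeq⟩
    exact ⟨L (z - prox z), by rw [hxz]; exact key z, by simpa only [← hxz] using hzeq⟩
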